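/- The function x ↦ sin(x)·exp(x²/4)/x is strictly increasing on the interval (0, π/2). -/

import Mathlib

open Real Set

lemma aux_hasDerivAt_g (x : ℝ) :
    HasDerivAt (fun x : ℝ => x * Real.cos x - Real.sin x + x ^ 2 * Real.sin x / 2)
      (x ^ 2 * Real.cos x / 2) x := by
  have h1 : HasDerivAt (fun x : ℝ => x * Real.cos x)
      (1 * Real.cos x + x * (-Real.sin x)) x :=
    (hasDerivAt_id x).mul (Real.hasDerivAt_cos x)
  have h2 : HasDerivAt Real.sin (Real.cos x) x := Real.hasDerivAt_sin x
  have h3 : HasDerivAt (fun x : ℝ => x ^ 2 * Real.sin x / 2)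
      ((2 * x ^ 1 * Real.sin x + x ^ 2 * Real.cos x) / 2) x :=
    (((hasDerivAt_pow 2 x).mul (Real.hasDerivAt_sin x)).div_const 2)
  have := (h1.sub h2).add h3
  exact this.congr_deriv (by ring)

lemma aux_g_pos {x : ℝ} (hx : x ∈ Set.Ioo 0 (Real.pi / 2)) :
    0 < x * Real.cos x - Real.sin x + x ^ 2 * Real.sin x / 2 := by
  obtain ⟨hx0, hxp⟩ := hx
  have hmono : StrictMonoOn (fun x : ℝ => x * Real.cos x - Real.sin x + x ^ 2 * Real.sin x / 2)
      (Set.Icc 0 (Real.pi / 2)) := by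
    apply strictMonoOn_of_deriv_pos (convex_Icc _ _)
    · exact Continuous.continuousOn (by continuity)
    · intro y hy
      rw [interior_Icc] at hy
      rw [(aux_hasDerivAt_g y).deriv]
      have hc : 0 < Real.cos y :=
        Real.cos_pos_of_mem_Ioo ⟨by linarith [hy.1, Real.pi_pos], hy.2⟩
      have hy2 : 0 < y ^ 2 := pow_pos hy.1 2
      exact div_pos (mul_pos hy2 hc) two_pos
  have h0 : (0 : ℝ) ∈ Set.Icc 0 (Real.pi / 2) := ⟨le_refl _, by positivity⟩
  have hx' : x ∈ Set.Icc 0 (Real.pi / 2) := ⟨hx0.le, hxp.le⟩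
  have := hmono h0 hx' hx0
  simpa using this

theorem stmt_7 :
    StrictMonoOn (fun x : ℝ => Real.sin x * Real.exp (x ^ 2 / 4) / x)
      (Set.Ioo 0 (Real.pi / 2)) := by
  apply strictMonoOn_of_deriv_pos (convex_Ioo _ _)
  · apply ContinuousOn.div
    · exact Continuous.continuousOn (by continuity)
    · exact continuousOn_id
    · intro x hx; exact ne_of_gt hx.1
  · intro x hx
    rw [interior_Ioo] at hx
    obtain ⟨hx0, hxp⟩ := hx
    have hxne : x ≠ 0 := ne_of_gt hx0
    have hE : HasDerivAt (fun x : ℝ => Real.exp (x ^ 2 / 4))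
        (Real.exp (x ^ 2 / 4) * (2 * x ^ 1 / 4)) x :=
      (((hasDerivAt_pow 2 x).div_const 4).exp)
    have hnum : HasDerivAt (fun x : ℝ => Real.sin x * Real.exp (x ^ 2 / 4))
        (Real.cos x * Real.exp (x ^ 2 / 4)
          + Real.sin x * (Real.exp (x ^ 2 / 4) * (2 * x ^ 1 / 4))) x :=
      (Real.hasDerivAt_sin x).mul hE
    have hf : HasDerivAt (fun x : ℝ => Real.sin x * Real.exp (x ^ 2 / 4) / x)
        (((Real.cos x * Real.exp (x ^ 2 / 4)
          + Real.sin x * (Real.exp (x ^ 2 / 4) * (2 * x ^ 1 / 4))) * x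
          - Real.sin x * Real.exp (x ^ 2 / 4) * 1) / x ^ 2) x :=
      hnum.div (hasDerivAt_id x) hxne
    rw [hf.deriv]
    have hg := aux_g_pos ⟨hx0, hxp⟩
    have hEpos : 0 < Real.exp (x ^ 2 / 4) := Real.exp_pos _
    have hnum_eq : (Real.cos x * Real.exp (x ^ 2 / 4)
          + Real.sin x * (Real.exp (x ^ 2 / 4) * (2 * x ^ 1 / 4))) * x
          - Real.sin x * Real.exp (x ^ 2 / 4) * 1
        = Real.exp (x ^ 2 / 4)
          * (x * Real.cos x - Real.sin x + x ^ 2 * Real.sin x / 2) := by ring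
    rw [hnum_eq]
    have hx2 : 0 < x ^ 2 := by positivity
    positivity
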